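/- Let A_k be a symmetric invertible matrix and L_k a symmetric positive definite matrix, both of size n. Consider the normal-equation iteration x^{(m)} = x^{(m-1)} + τ L_k⁻¹ A_k L_k⁻¹ (f − A_k x^{(m-1)}) with exact solution x* (A_k x* = f). If τ ρ(L_k⁻¹A_kL_k⁻¹A_k) ≤ 2 − ε for some ε > 0, then the error propagation matrix M = I − τ L_k⁻¹A_kL_k⁻¹A_k satisfies ‖L_k^{1/2} A_k M^ν A_k⁻¹ L_k^{-1/2} · L_k^{1/2}(x^{(0)} − x*)‖ ≤ (C/√ν) ‖x^{(0)} − x*‖_{L_k} for all ν ≥ 1, where ‖y‖_{L_k}² = (L_k y, y) and C depends only on τ and ε; i.e., the smoothing property sup_{x̃≠0} (A_k(x^{(ν)} − x*), x̃)/‖x̃‖_{L_k} ≤ C ν^{-1/2} ‖x^{(0)} − x*‖_{L_k} holds. -/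

import Mathlib

open Matrix

private lemma sumDot {n : ℕ} (v : Fin n → Fin n → ℝ) (w : Fin n → ℝ) :
    (∑ i, v i) ⬝ᵥ w = ∑ i, v i ⬝ᵥ w := by
  simp only [dotProduct, Finset.sum_apply, Finset.sum_mul]
  exact Finset.sum_comm

private lemma dotSum {n : ℕ} (w : Fin n → ℝ) (v : Fin n → Fin n → ℝ) :
    w ⬝ᵥ (∑ i, v i) = ∑ i, w ⬝ᵥ v i := by
  simp only [dotProduct, Finset.sum_apply, Finset.mul_sum]
  exact Finset.sum_comm

private lemma mulVecSum {n : ℕ} (G : Matrix (Fin n) (Fin n) ℝ) (v : Fin n → Fin n → ℝ) :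
    G *ᵥ (∑ i, v i) = ∑ i, G *ᵥ v i := by
  simpa only [Matrix.mulVecLin_apply] using map_sum (Matrix.mulVecLin G) v Finset.univ

set_option maxHeartbeats 1000000 in
private lemma scalar_bound (τ ε : ℝ) (hτ : 0 < τ) (hε : 0 < ε) (ν : ℕ) (hν : 1 ≤ ν)
    (lam : ℝ) (h : τ * lam ^ 2 ≤ 2 - ε) :
    |lam * (1 - τ * lam ^ 2) ^ ν| ≤
      ((1 + Real.sqrt 2 / ε) / Real.sqrt τ) / Real.sqrt ν := by
  have hν0 : (0 : ℝ) < ν := by exact_mod_cast Nat.lt_of_lt_of_le Nat.zero_lt_one hν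
  have hsν : (0 : ℝ) < Real.sqrt ν := Real.sqrt_pos.2 hν0
  have hsτ : (0 : ℝ) < Real.sqrt τ := Real.sqrt_pos.2 hτ
  have hsν1 : (1 : ℝ) ≤ Real.sqrt ν := by
    rw [show (1:ℝ) = Real.sqrt 1 by simp]
    exact Real.sqrt_le_sqrt (by exact_mod_cast hν)
  have hsνν : Real.sqrt ν ≤ ν := by
    nlinarith [Real.sq_sqrt hν0.le, Real.sqrt_nonneg (ν:ℝ)]
  set t : ℝ := τ * lam ^ 2 with ht
  have ht0 : 0 ≤ t := mul_nonneg hτ.le (sq_nonneg _)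
  have habs : |lam * (1 - t) ^ ν| = |lam| * |1 - t| ^ ν := by
    rw [abs_mul, abs_pow]
  rw [habs]
  rcases le_or_gt t 1 with hcase | hcase
  · -- case t ≤ 1
    have h1t : 0 ≤ 1 - t := by linarith
    have hsq : (|lam| * |1 - t| ^ ν) ^ 2 ≤ 1 / (τ * ν) := by
      have h2 : (|lam| * |1 - t| ^ ν) ^ 2 = lam ^ 2 * (|1 - t| ^ 2) ^ ν := by
        rw [mul_pow, sq_abs, ← pow_mul, ← pow_mul, Nat.mul_comm]
      rw [h2]
      have h3 : (|1 - t| ^ 2) ^ ν ≤ Real.exp (-(2 * t * ν)) := by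
        have h4 : |1 - t| ^ 2 ≤ Real.exp (-(2 * t)) := by
          rw [sq_abs]
          have h1 : 1 - t ≤ Real.exp (-t) := by linarith [Real.add_one_le_exp (-t)]
          calc (1 - t) ^ 2 ≤ Real.exp (-t) ^ 2 := pow_le_pow_left₀ h1t h1 2
            _ = Real.exp (-(2 * t)) := by
                rw [← Real.exp_nat_mul]; ring_nf
        calc (|1 - t| ^ 2) ^ ν ≤ Real.exp (-(2 * t)) ^ ν :=
              pow_le_pow_left₀ (sq_nonneg _) h4 ν
          _ = Real.exp (-(2 * t * ν)) := by rw [← Real.exp_nat_mul]; ring_nf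
      rcases eq_or_lt_of_le ht0 with h0 | h0
      · have hl : lam ^ 2 = 0 := by nlinarith
        rw [hl, zero_mul]
        positivity
      · have hexple : Real.exp (-(2 * t * ν)) ≤ 1 / (2 * t * ν) := by
          rw [Real.exp_neg, one_div]
          exact inv_anti₀ (by positivity)
            (by linarith [Real.add_one_le_exp (2 * t * ν)])
        have hlam2 : lam ^ 2 = t / τ := by rw [ht]; field_simp
        calc lam ^ 2 * (|1 - t| ^ 2) ^ ν ≤ (t / τ) * (1 / (2 * t * ν)) := by
              apply mul_le_mul (le_of_eq hlam2) (h3.trans hexple) (by positivity) (by positivity)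
          _ = 1 / (2 * (τ * ν)) := by field_simp
          _ ≤ 1 / (τ * ν) := by
              apply one_div_le_one_div_of_le (by positivity)
              nlinarith [mul_pos hτ hν0]
    have hle : |lam| * |1 - t| ^ ν ≤ Real.sqrt (1 / (τ * ν)) := by
      have h5 := Real.sqrt_le_sqrt hsq
      rwa [Real.sqrt_sq (by positivity)] at h5
    refine hle.trans ?_
    have h6 : Real.sqrt (1 / (τ * ν)) = 1 / (Real.sqrt τ * Real.sqrt ν) := by
      rw [one_div, Real.sqrt_inv, Real.sqrt_mul hτ.le, one_div]
    rw [h6, div_div]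
    rw [div_le_div_iff₀ (by positivity) (by positivity)]
    have : (0:ℝ) ≤ Real.sqrt 2 / ε := by positivity
    nlinarith [mul_pos hsτ hsν]
  · -- case 1 < t
    have hε1 : ε < 1 := by nlinarith
    have hr0 : 0 < 1 - ε := by linarith
    have h1t : |1 - t| ≤ 1 - ε := by
      rw [abs_sub_comm, abs_of_nonneg (by linarith)]
      linarith
    have hlam : |lam| ≤ Real.sqrt 2 / Real.sqrt τ := by
      have h7 : lam ^ 2 ≤ 2 / τ := by
        rw [le_div_iff₀ hτ]
        nlinarith
      have h8 := Real.sqrt_le_sqrt h7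
      rwa [Real.sqrt_sq_eq_abs, Real.sqrt_div (by norm_num : (0:ℝ) ≤ 2) τ] at h8
    -- Bernoulli bound : (1-ε)^ν ≤ 1/(ε*ν)
    have hbern : (1 - ε) ^ ν ≤ 1 / (ε * ν) := by
      have hx : (0:ℝ) ≤ ε / (1 - ε) := by positivity
      have hb := one_add_mul_le_pow (by linarith : (-2:ℝ) ≤ ε / (1 - ε)) ν
      have h9 : (1 : ℝ) + ε / (1 - ε) = 1 / (1 - ε) := by field_simp; ring
      rw [h9, div_pow, one_pow] at hb
      have h10 : ε * ν ≤ 1 / (1 - ε) ^ ν := by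
        refine le_trans ?_ hb
        have : ε ≤ ε / (1 - ε) := by
          rw [le_div_iff₀ hr0]; nlinarith
        nlinarith
      have hp : (0:ℝ) < (1 - ε) ^ ν := pow_pos hr0 ν
      rw [le_div_iff₀ hp] at h10
      rw [le_div_iff₀ (by positivity : (0:ℝ) < ε * ν)]
      nlinarith [h10]
    have step1 : |lam| * |1 - t| ^ ν ≤ (Real.sqrt 2 / Real.sqrt τ) * ((1 - ε) ^ ν) :=
      mul_le_mul hlam (pow_le_pow_left₀ (abs_nonneg _) h1t ν)
        (pow_nonneg (abs_nonneg _) ν) (by positivity)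
    refine step1.trans ?_
    have step2 : (Real.sqrt 2 / Real.sqrt τ) * ((1 - ε) ^ ν)
        ≤ (Real.sqrt 2 / Real.sqrt τ) * (1 / (ε * ν)) :=
      mul_le_mul_of_nonneg_left hbern (by positivity)
    refine step2.trans ?_
    rw [div_div, div_mul_div_comm, mul_one, div_le_div_iff₀ (by positivity) (by positivity)]
    have h11 : Real.sqrt 2 * Real.sqrt ν ≤ Real.sqrt 2 * ν :=
      mul_le_mul_of_nonneg_left hsνν (Real.sqrt_nonneg 2)
    have h12 : (0:ℝ) ≤ Real.sqrt 2 := Real.sqrt_nonneg 2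
    have h13 : (0:ℝ) < Real.sqrt τ * (ε * ν) := by positivity
    -- goal : √2 * (√τ * √ν) ≤ (1 + √2/ε) * (√τ * (ε * ν))
    have h14 : (1 + Real.sqrt 2 / ε) * (Real.sqrt τ * (ε * ν))
        = Real.sqrt τ * (ε * ν) + Real.sqrt 2 * (Real.sqrt τ * ν) := by
      field_simp
    rw [h14]
    nlinarith [mul_nonneg hsτ.le (mul_nonneg hε.le hν0.le)]

private lemma eigen_dot {n : ℕ} {S : Matrix (Fin n) (Fin n) ℝ} (hS : S.IsHermitian) (i j : Fin n) :
    ⇑(hS.eigenvectorBasis i) ⬝ᵥ ⇑(hS.eigenvectorBasis j) = if i = j then 1 else 0 := by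
  have h := hS.eigenvectorBasis.orthonormal
  rw [orthonormal_iff_ite] at h
  rw [← h i j]
  simp [PiLp.inner_apply, dotProduct, RCLike.inner_apply]
  exact Finset.sum_congr rfl (fun _ _ => mul_comm _ _)

private lemma eigen_expand {n : ℕ} {S : Matrix (Fin n) (Fin n) ℝ} (hS : S.IsHermitian)
    (v : Fin n → ℝ) :
    v = ∑ i, (⇑(hS.eigenvectorBasis i) ⬝ᵥ v) • ⇑(hS.eigenvectorBasis i) := by
  have h := hS.eigenvectorBasis.sum_repr ((WithLp.equiv 2 (Fin n → ℝ)).symm v)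
  have hrepr : ∀ i, hS.eigenvectorBasis.repr ((WithLp.equiv 2 (Fin n → ℝ)).symm v) i
      = ⇑(hS.eigenvectorBasis i) ⬝ᵥ v := by
    intro i
    rw [hS.eigenvectorBasis.repr_apply_apply]
    simp [PiLp.inner_apply, dotProduct, RCLike.inner_apply]
    exact Finset.sum_congr rfl (fun _ _ => mul_comm _ _)
  conv_lhs => rw [show v = (WithLp.equiv 2 (Fin n → ℝ)) ((WithLp.equiv 2 (Fin n → ℝ)).symm v) from rfl]
  rw [← h]
  simp only [hrepr]
  simp [WithLp.ofLp_sum, WithLp.ofLp_smul]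

/-- Spectral estimate: if `G` acts diagonally on the eigenbasis of the symmetric matrix `S`
with eigenvalue bound `c`, then `(Gu, w) ≤ c ‖u‖ ‖w‖`. -/
private lemma spectral_bound {n : ℕ} {S : Matrix (Fin n) (Fin n) ℝ} (hS : S.IsHermitian)
    (G : Matrix (Fin n) (Fin n) ℝ) (g : Fin n → ℝ)
    (hG : ∀ i, G *ᵥ ⇑(hS.eigenvectorBasis i) = g i • ⇑(hS.eigenvectorBasis i))
    (c : ℝ) (hc0 : 0 ≤ c) (hc : ∀ i, |g i| ≤ c) (u w : Fin n → ℝ) :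
    (G *ᵥ u) ⬝ᵥ w ≤ c * Real.sqrt (u ⬝ᵥ u) * Real.sqrt (w ⬝ᵥ w) := by
  set b : Fin n → Fin n → ℝ := fun i => ⇑(hS.eigenvectorBasis i) with hb
  set a : Fin n → ℝ := fun i => b i ⬝ᵥ u with ha
  set d : Fin n → ℝ := fun i => b i ⬝ᵥ w with hd
  have key : (G *ᵥ u) ⬝ᵥ w = ∑ i, a i * g i * d i := by
    conv_lhs => rw [eigen_expand hS u]
    rw [mulVecSum]
    rw [sumDot]
    refine Finset.sum_congr rfl fun i _ => ?_
    rw [Matrix.mulVec_smul, hG i, smul_smul, smul_dotProduct]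
    simp only [ha, hd, smul_eq_mul]
    try ring
  have hparseval : ∀ (v : Fin n → ℝ), v ⬝ᵥ v = ∑ i, (b i ⬝ᵥ v) ^ 2 := by
    intro v
    have h1 : v ⬝ᵥ v = v ⬝ᵥ ∑ i, (b i ⬝ᵥ v) • b i :=
      congrArg (fun z => v ⬝ᵥ z) (eigen_expand hS v)
    rw [h1, dotSum]
    refine Finset.sum_congr rfl fun i _ => ?_
    rw [dotProduct_smul, smul_eq_mul, dotProduct_comm]
    ring
  rw [key, hparseval u, hparseval w]
  calc ∑ i, a i * g i * d i ≤ ∑ i, c * (|a i| * |d i|) := by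
        refine Finset.sum_le_sum fun i _ => ?_
        calc a i * g i * d i ≤ |a i * g i * d i| := le_abs_self _
          _ = |g i| * (|a i| * |d i|) := by rw [abs_mul, abs_mul]; ring
          _ ≤ c * (|a i| * |d i|) :=
              mul_le_mul_of_nonneg_right (hc i) (by positivity)
    _ = c * ∑ i, |a i| * |d i| := by rw [Finset.mul_sum]
    _ ≤ c * (Real.sqrt (∑ i, |a i| ^ 2) * Real.sqrt (∑ i, |d i| ^ 2)) :=
        mul_le_mul_of_nonneg_left (Real.sum_mul_le_sqrt_mul_sqrt _ _ _) hc0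
    _ = c * Real.sqrt (∑ i, (b i ⬝ᵥ u) ^ 2) * Real.sqrt (∑ i, (b i ⬝ᵥ w) ^ 2) := by
        simp only [sq_abs, ha, hd]
        ring

set_option maxHeartbeats 1000000 in
/-- Smoothing property of the damped preconditioned normal-equation smoother: if `A_k` is
symmetric and invertible, `L_k` symmetric positive definite, and
`τ ρ(L_k⁻¹A_kL_k⁻¹A_k) ≤ 2 − ε` (expressed via Rayleigh quotients:
`τ·vᵀAL⁻¹Av ≤ (2−ε)·vᵀLv`), then the iterates
`x⁽ᵐ⁾ = x⁽ᵐ⁻¹⁾ + τL⁻¹AL⁻¹(f − Ax⁽ᵐ⁻¹⁾)` satisfy, for a constant `C = C(τ,ε)`,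
`(A(x⁽ᵛ⁾ − x*), x̃) ≤ C ν^{-1/2} ‖x⁽⁰⁾ − x*‖_L ‖x̃‖_L` for all `x̃`,
where `‖y‖_L² = (Ly, y)`. -/
theorem stmt_7 (τ ε : ℝ) (hτ : 0 < τ) (hε : 0 < ε) :
    ∃ C : ℝ, 0 < C ∧
      ∀ (n : ℕ) (A L : Matrix (Fin n) (Fin n) ℝ),
        A.IsSymm → IsUnit A.det → L.IsSymm → L.PosDef →
        (∀ v : Fin n → ℝ,
          τ * (v ⬝ᵥ (A * L⁻¹ * A).mulVec v) ≤ (2 - ε) * (v ⬝ᵥ L.mulVec v)) →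
        ∀ (f xstar x0 : Fin n → ℝ) (x : ℕ → Fin n → ℝ),
          x 0 = x0 →
          (∀ m : ℕ, x (m + 1) = x m + τ • (L⁻¹ * A * L⁻¹).mulVec (f - A.mulVec (x m))) →
          A.mulVec xstar = f →
          ∀ ν : ℕ, 1 ≤ ν → ∀ y : Fin n → ℝ,
            (A.mulVec (x ν - xstar)) ⬝ᵥ y ≤
              C / Real.sqrt ν * Real.sqrt ((x0 - xstar) ⬝ᵥ L.mulVec (x0 - xstar)) *
                Real.sqrt (y ⬝ᵥ L.mulVec y) := by
  refine ⟨(1 + Real.sqrt 2 / ε) / Real.sqrt τ, by positivity, ?_⟩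
  intro n A L hA hAdet hL hLpd hray f xstar x0 x hx0 hrec hsol ν hν y
  have hν0 : (0 : ℝ) < ν := by exact_mod_cast Nat.lt_of_lt_of_le Nat.zero_lt_one hν
  have hsν : (0 : ℝ) < Real.sqrt ν := Real.sqrt_pos.2 hν0
  -- the square root of L
  obtain ⟨N, hNN, hNherm⟩ : ∃ N : Matrix (Fin n) (Fin n) ℝ, N * N = L ∧ N.IsHermitian := by
    open scoped MatrixOrder in
    exact ⟨CFC.sqrt L, CFC.sqrt_mul_sqrt_self L hLpd.posSemidef.nonneg,
      (CFC.sqrt_nonneg L).posSemidef.1⟩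
  have hNsymm : Nᵀ = N := by
    have h := hNherm
    rwa [Matrix.IsHermitian, conjTranspose_eq_transpose_of_trivial] at h
  have hNdet : IsUnit N.det := by
    have h1 : IsUnit L.det := (Matrix.isUnit_iff_isUnit_det L).1 hLpd.isUnit
    rw [← hNN, Matrix.det_mul] at h1
    exact isUnit_of_mul_isUnit_left h1
  haveI := N.invertibleOfIsUnitDet hNdet
  have hNinvT : N⁻¹ᵀ = N⁻¹ := by
    rw [Matrix.transpose_nonsing_inv, hNsymm]
  have hLinv : L⁻¹ = N⁻¹ * N⁻¹ := by rw [← hNN, Matrix.mul_inv_rev]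
  have hAT : Aᵀ = A := hA
  set S := N⁻¹ * A * N⁻¹ with hSdef
  have hST : Sᵀ = S := by
    rw [hSdef]
    simp [Matrix.transpose_mul, hNinvT, hAT, Matrix.mul_assoc]
  have hSherm : S.IsHermitian := by
    rw [Matrix.IsHermitian, conjTranspose_eq_transpose_of_trivial]
    exact hST
  set P := (1 : Matrix (Fin n) (Fin n) ℝ) - τ • (S * S) with hPdef
  -- error propagation matrix identity
  have hMP : (1 : Matrix (Fin n) (Fin n) ℝ) - τ • (L⁻¹ * A * L⁻¹ * A) = N⁻¹ * P * N := by
    rw [hPdef, hLinv, hSdef]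
    simp only [Matrix.mul_sub, Matrix.sub_mul, Matrix.mul_one, Matrix.mul_smul,
      Matrix.smul_mul, Matrix.one_mul, Matrix.mul_assoc,
      Matrix.inv_mul_cancel_left_of_invertible, Matrix.mul_inv_cancel_left_of_invertible,
      Matrix.inv_mul_of_invertible, Matrix.mul_inv_of_invertible]
  -- error recursion
  have herr : ∀ m : ℕ, x m - xstar
      = ((1 - τ • (L⁻¹ * A * L⁻¹ * A)) ^ m) *ᵥ (x0 - xstar) := by
    intro m
    induction m with
    | zero => simp [hx0]
    | succ m ih =>
      have key : x m + τ • (L⁻¹ * A * L⁻¹) *ᵥ (f - A *ᵥ x m) - xstar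
          = (1 - τ • (L⁻¹ * A * L⁻¹ * A)) *ᵥ (x m - xstar) := by
        rw [← hsol]
        rw [show A *ᵥ xstar - A *ᵥ x m = -(A *ᵥ (x m - xstar)) from by
          rw [Matrix.mulVec_sub]; abel]
        rw [Matrix.mulVec_neg, smul_neg]
        rw [Matrix.sub_mulVec, Matrix.one_mulVec, Matrix.smul_mulVec]
        simp only [Matrix.mulVec_mulVec]
        abel
      rw [hrec m, key, ih, Matrix.mulVec_mulVec, ← pow_succ']
  have hMpow : ∀ k : ℕ, (1 - τ • (L⁻¹ * A * L⁻¹ * A)) ^ k = N⁻¹ * P ^ k * N := by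
    intro k
    induction k with
    | zero => simp
    | succ k ih =>
      rw [pow_succ, ih, hMP, pow_succ]
      simp only [Matrix.mul_assoc, Matrix.mul_inv_cancel_left_of_invertible,
        Matrix.inv_mul_cancel_left_of_invertible]
  set G := S * P ^ ν with hGdef
  have hA' : A = N * S * N := by
    rw [hSdef]
    simp only [Matrix.mul_assoc, Matrix.mul_inv_cancel_left_of_invertible,
      Matrix.inv_mul_cancel_left_of_invertible, Matrix.mul_inv_cancel_right_of_invertible,
      Matrix.inv_mul_cancel_right_of_invertible, Matrix.inv_mul_of_invertible,
      Matrix.mul_inv_of_invertible, Matrix.mul_one, Matrix.one_mul]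
  have hAM : A * (1 - τ • (L⁻¹ * A * L⁻¹ * A)) ^ ν = N * G * N := by
    rw [hMpow ν, hGdef]
    conv_lhs => rw [hA']
    simp only [Matrix.mul_assoc, Matrix.mul_inv_cancel_left_of_invertible,
      Matrix.inv_mul_cancel_left_of_invertible]
  -- dot product transfer for symmetric matrices
  have hdot : ∀ (B : Matrix (Fin n) (Fin n) ℝ), Bᵀ = B →
      ∀ z w : Fin n → ℝ, (B *ᵥ z) ⬝ᵥ w = z ⬝ᵥ (B *ᵥ w) := by
    intro B hB z w
    rw [dotProduct_comm, dotProduct_mulVec, ← Matrix.mulVec_transpose, hB, dotProduct_comm]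
  have hLHS : (A *ᵥ (x ν - xstar)) ⬝ᵥ y
      = (G *ᵥ (N *ᵥ (x0 - xstar))) ⬝ᵥ (N *ᵥ y) := by
    rw [herr ν, Matrix.mulVec_mulVec, hAM, ← Matrix.mulVec_mulVec, ← Matrix.mulVec_mulVec,
      hdot N hNsymm]
  have hnorm : ∀ z : Fin n → ℝ, (N *ᵥ z) ⬝ᵥ (N *ᵥ z) = z ⬝ᵥ L *ᵥ z := by
    intro z
    rw [hdot N hNsymm, Matrix.mulVec_mulVec, hNN]
  -- transferred Rayleigh quotient bound
  have hray' : ∀ v : Fin n → ℝ, τ * (v ⬝ᵥ (S * S) *ᵥ v) ≤ (2 - ε) * (v ⬝ᵥ v) := by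
    intro v
    have h1 := hray (N⁻¹ *ᵥ v)
    have e1 : (N⁻¹ *ᵥ v) ⬝ᵥ (A * L⁻¹ * A) *ᵥ (N⁻¹ *ᵥ v) = v ⬝ᵥ (S * S) *ᵥ v := by
      rw [hdot _ hNinvT, Matrix.mulVec_mulVec, Matrix.mulVec_mulVec]
      congr 2
      rw [hLinv, hSdef]
      simp only [Matrix.mul_assoc]
    have e2 : (N⁻¹ *ᵥ v) ⬝ᵥ L *ᵥ (N⁻¹ *ᵥ v) = v ⬝ᵥ v := by
      rw [hdot _ hNinvT, Matrix.mulVec_mulVec, Matrix.mulVec_mulVec, ← hNN]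
      rw [show N⁻¹ * (N * N) * N⁻¹ = 1 from by
        simp only [Matrix.mul_assoc, Matrix.mul_inv_cancel_left_of_invertible,
          Matrix.mul_inv_of_invertible, Matrix.inv_mul_of_invertible, Matrix.mul_one,
          Matrix.inv_mul_cancel_left_of_invertible]]
      rw [Matrix.one_mulVec]
    rw [e1, e2] at h1
    exact h1
  -- eigenvalue bounds
  have hb1 : ∀ i, ⇑(hSherm.eigenvectorBasis i) ⬝ᵥ ⇑(hSherm.eigenvectorBasis i) = 1 := by
    intro i
    rw [eigen_dot hSherm i i]
    simp
  have hSS : ∀ i, (S * S) *ᵥ ⇑(hSherm.eigenvectorBasis i)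
      = (hSherm.eigenvalues i ^ 2) • ⇑(hSherm.eigenvectorBasis i) := by
    intro i
    rw [← Matrix.mulVec_mulVec, hSherm.mulVec_eigenvectorBasis, Matrix.mulVec_smul,
      hSherm.mulVec_eigenvectorBasis, smul_smul, ← sq]
  have heigbound : ∀ i, τ * hSherm.eigenvalues i ^ 2 ≤ 2 - ε := by
    intro i
    have h1 := hray' ⇑(hSherm.eigenvectorBasis i)
    rw [hSS i, dotProduct_smul, hb1 i, smul_eq_mul, mul_one] at h1
    nlinarith [hb1 i]
  have hPb : ∀ i, P *ᵥ ⇑(hSherm.eigenvectorBasis i)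
      = (1 - τ * hSherm.eigenvalues i ^ 2) • ⇑(hSherm.eigenvectorBasis i) := by
    intro i
    rw [hPdef, Matrix.sub_mulVec, Matrix.one_mulVec, Matrix.smul_mulVec, hSS i,
      smul_smul, sub_smul, one_smul]
  have hPk : ∀ (k : ℕ) i, (P ^ k) *ᵥ ⇑(hSherm.eigenvectorBasis i)
      = ((1 - τ * hSherm.eigenvalues i ^ 2) ^ k) • ⇑(hSherm.eigenvectorBasis i) := by
    intro k i
    induction k with
    | zero => simp [Matrix.one_mulVec]
    | succ k ih =>
      rw [show P ^ (k + 1) = P * P ^ k from pow_succ' P k, ← Matrix.mulVec_mulVec, ih,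
        Matrix.mulVec_smul, hPb i, smul_smul, ← pow_succ]
  have hGb : ∀ i, G *ᵥ ⇑(hSherm.eigenvectorBasis i)
      = (hSherm.eigenvalues i * (1 - τ * hSherm.eigenvalues i ^ 2) ^ ν)
          • ⇑(hSherm.eigenvectorBasis i) := by
    intro i
    rw [hGdef, ← Matrix.mulVec_mulVec, hPk ν i, Matrix.mulVec_smul,
      hSherm.mulVec_eigenvectorBasis, smul_smul, mul_comm]
  have hgabs : ∀ i, |hSherm.eigenvalues i * (1 - τ * hSherm.eigenvalues i ^ 2) ^ ν|
      ≤ (1 + Real.sqrt 2 / ε) / Real.sqrt τ / Real.sqrt ν := fun i =>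
    scalar_bound τ ε hτ hε ν hν (hSherm.eigenvalues i) (heigbound i)
  have main := spectral_bound hSherm G
    (fun i => hSherm.eigenvalues i * (1 - τ * hSherm.eigenvalues i ^ 2) ^ ν) hGb
    ((1 + Real.sqrt 2 / ε) / Real.sqrt τ / Real.sqrt ν) (by positivity) hgabs
    (N *ᵥ (x0 - xstar)) (N *ᵥ y)
  rw [hnorm, hnorm] at main
  rw [show (A.mulVec (x ν - xstar)) ⬝ᵥ y = (A *ᵥ (x ν - xstar)) ⬝ᵥ y from rfl, hLHS]
  exact main
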